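/- arXiv:1910.01195 — 4 statements merged into one kernel-verified Lean document; each statement's English description precedes it below -/
import Mathlib

section
/- Let I₀ ⊆ ℝ be an open interval, V : ℝ → ℝ be twice continuously differentiable, a < b real numbers, and α, β : I₀ → (a, b) continuous functions such that for every E ∈ I₀: α(E) < β(E), V(α(E)) = V(β(E)) = E, V'(α(E)) < 0, V'(β(E)) > 0, and for x ∈ [a, b] one has V(x) < E if and only if α(E) < x < β(E). Then the action integral 𝒜(E) := ∫_{α(E)}^{β(E)} √(E − V(t)) dt is differentiable on I₀, with 𝒜'(E) = (1/2) ∫_{α(E)}^{β(E)} (E − V(x))^(−1/2) dx (a convergent improper integral), and 𝒜'(E) > 0 for every E ∈ I₀. -/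
open Set MeasureTheory Topology

lemma rpow_nhalf_of_nonpos {x : ℝ} (hx : x ≤ 0) : x ^ (-(1:ℝ)/2) = 0 := by
  rcases lt_or_eq_of_le hx with h | h
  · rw [Real.rpow_def_of_neg h]
    have hc : Real.cos ((-(1:ℝ)/2) * Real.pi) = 0 := by
      have : (-(1:ℝ)/2) * Real.pi = -(Real.pi/2) := by ring
      rw [this, Real.cos_neg, Real.cos_pi_div_two]
    rw [hc, mul_zero]
  · rw [h, Real.zero_rpow (by norm_num)]

lemma rpow_nhalf_nonneg (x : ℝ) : 0 ≤ x ^ (-(1:ℝ)/2) := by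
  rcases le_or_gt x 0 with h | h
  · rw [rpow_nhalf_of_nonpos h]
  · exact (Real.rpow_pos_of_pos h _).le

lemma intervalIntegrable_rpow_sub (c s r : ℝ) :
    IntervalIntegrable (fun u => (u - c) ^ (-(1:ℝ)/2)) volume s r := by
  simpa using (intervalIntegral.intervalIntegrable_rpow' (by norm_num : (-1:ℝ) < -(1:ℝ)/2)
    (a := s - c) (b := r - c)).comp_sub_right c

lemma intervalIntegrable_rpow_sub_left (c s r : ℝ) :
    IntervalIntegrable (fun u => (c - u) ^ (-(1:ℝ)/2)) volume s r := by
  simpa using (intervalIntegral.intervalIntegrable_rpow' (by norm_num : (-1:ℝ) < -(1:ℝ)/2)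
    (a := c - s) (b := c - r)).comp_sub_left c

lemma integral_rpow_sub (c s r : ℝ) :
    ∫ u in s..r, (u - c) ^ (-(1:ℝ)/2) = 2 * Real.sqrt (r - c) - 2 * Real.sqrt (s - c) := by
  rw [intervalIntegral.integral_comp_sub_right (fun x => x ^ (-(1:ℝ)/2)) c]
  rw [integral_rpow (Or.inl (by norm_num))]
  rw [Real.sqrt_eq_rpow, Real.sqrt_eq_rpow]
  norm_num; ring

lemma integral_rpow_sub_left (c s r : ℝ) :
    ∫ u in s..r, (c - u) ^ (-(1:ℝ)/2) = 2 * Real.sqrt (c - s) - 2 * Real.sqrt (c - r) := by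
  rw [intervalIntegral.integral_comp_sub_left (fun x => x ^ (-(1:ℝ)/2)) c]
  rw [integral_rpow (Or.inl (by norm_num))]
  rw [Real.sqrt_eq_rpow, Real.sqrt_eq_rpow]
  norm_num; ring

lemma mvt_right (V : ℝ → ℝ) (hV : Differentiable ℝ V) (m p q : ℝ)
    (hd : ∀ t ∈ Icc p q, m ≤ deriv V t) :
    ∀ t ∈ Icc p q, ∀ c ∈ Icc p q, t ≤ c → m * (c - t) ≤ V c - V t := by
  intro t ht c hc htc
  have hmono : MonotoneOn (fun x => V x - m * x) (Icc p q) := by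
    apply monotoneOn_of_deriv_nonneg (convex_Icc p q)
    · exact ((hV.continuous.sub (continuous_const.mul continuous_id)).continuousOn)
    · intro x hx
      exact ((hV x).sub ((differentiable_id.const_mul m) x)).differentiableWithinAt
    · intro x hx
      rw [interior_Icc] at hx
      have hD : HasDerivAt (fun x => V x - m * x) (deriv V x - m * 1) x :=
        (hV x).hasDerivAt.sub ((hasDerivAt_id x).const_mul m)
      rw [hD.deriv]
      have := hd x (Ioo_subset_Icc_self hx)
      linarith
  have := hmono ht hc htc
  simp only at this
  linarith

lemma mvt_left (V : ℝ → ℝ) (hV : Differentiable ℝ V) (m p q : ℝ)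
    (hd : ∀ t ∈ Icc p q, deriv V t ≤ -m) :
    ∀ t ∈ Icc p q, ∀ c ∈ Icc p q, c ≤ t → m * (t - c) ≤ V c - V t := by
  intro t ht c hc hct
  have hmono : AntitoneOn (fun x => V x + m * x) (Icc p q) := by
    apply antitoneOn_of_deriv_nonpos (convex_Icc p q)
    · exact ((hV.continuous.add (continuous_const.mul continuous_id)).continuousOn)
    · intro x hx
      exact ((hV x).add ((differentiable_id.const_mul m) x)).differentiableWithinAt
    · intro x hx
      rw [interior_Icc] at hx
      have hD : HasDerivAt (fun x => V x + m * x) (deriv V x + m * 1) x :=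
        (hV x).hasDerivAt.add ((hasDerivAt_id x).const_mul m)
      rw [hD.deriv]
      have := hd x (Ioo_subset_Icc_self hx)
      linarith
  have := hmono hc ht hct
  simp only at this
  linarith

lemma bound_right (V : ℝ → ℝ) (hV : Continuous V) (u m p q : ℝ) (hm : 0 < m) (hpq : p ≤ q)
    (h : ∀ t ∈ Ioo p q, m * (q - t) ≤ u - V t) :
    IntegrableOn (fun t => (u - V t) ^ (-(1:ℝ)/2)) (Ioo p q) ∧
      ∫ t in Ioo p q, (u - V t) ^ (-(1:ℝ)/2)
        ≤ m ^ (-(1:ℝ)/2) * (2 * Real.sqrt (q - p)) := by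
  set g : ℝ → ℝ := fun t => m ^ (-(1:ℝ)/2) * (q - t) ^ (-(1:ℝ)/2) with hg
  have hptw : ∀ t ∈ Ioo p q, (u - V t) ^ (-(1:ℝ)/2) ≤ g t := by
    intro t ht
    have h1 : 0 < m * (q - t) := mul_pos hm (by linarith [ht.2])
    have h3 : (u - V t) ^ (-(1:ℝ)/2) ≤ (m * (q - t)) ^ (-(1:ℝ)/2) :=
      Real.rpow_le_rpow_of_nonpos h1 (h t ht) (by norm_num)
    have h4 : (m * (q - t)) ^ (-(1:ℝ)/2) = g t := Real.mul_rpow hm.le (by linarith [ht.2])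
    rw [← h4]; exact h3
  have hgint : IntegrableOn g (Ioo p q) volume :=
    (intervalIntegrable_iff_integrableOn_Ioo_of_le hpq).mp
      ((intervalIntegrable_rpow_sub_left q p q).const_mul (m ^ (-(1:ℝ)/2)))
  have hmeas : Measurable fun t => (u - V t) ^ (-(1:ℝ)/2) :=
    (measurable_const.sub hV.measurable).pow measurable_const
  have hint : IntegrableOn (fun t => (u - V t) ^ (-(1:ℝ)/2)) (Ioo p q) volume := by
    apply Integrable.mono hgint (hmeas.aestronglyMeasurable.restrict)
    rw [ae_restrict_iff' measurableSet_Ioo]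
    filter_upwards with t ht
    rw [Real.norm_eq_abs, Real.norm_eq_abs, abs_of_nonneg (rpow_nhalf_nonneg _),
      abs_of_nonneg (mul_nonneg (rpow_nhalf_nonneg m) (rpow_nhalf_nonneg _))]
    exact hptw t ht
  refine ⟨hint, (setIntegral_mono_on hint hgint measurableSet_Ioo hptw).trans ?_⟩
  rw [show ∫ t in Ioo p q, g t = m ^ (-(1:ℝ)/2) * ∫ t in Ioo p q, (q - t) ^ (-(1:ℝ)/2) from
    integral_const_mul _ _]
  rw [show ∫ t in Ioo p q, (q - t) ^ (-(1:ℝ)/2) = 2 * Real.sqrt (q - p) from by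
    rw [← integral_Ioc_eq_integral_Ioo, ← intervalIntegral.integral_of_le hpq,
      integral_rpow_sub_left, show q - q = 0 from by ring, Real.sqrt_zero]; ring]

lemma bound_left (V : ℝ → ℝ) (hV : Continuous V) (u m p q : ℝ) (hm : 0 < m) (hpq : p ≤ q)
    (h : ∀ t ∈ Ioo p q, m * (t - p) ≤ u - V t) :
    IntegrableOn (fun t => (u - V t) ^ (-(1:ℝ)/2)) (Ioo p q) ∧
      ∫ t in Ioo p q, (u - V t) ^ (-(1:ℝ)/2)
        ≤ m ^ (-(1:ℝ)/2) * (2 * Real.sqrt (q - p)) := by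
  set g : ℝ → ℝ := fun t => m ^ (-(1:ℝ)/2) * (t - p) ^ (-(1:ℝ)/2) with hg
  have hptw : ∀ t ∈ Ioo p q, (u - V t) ^ (-(1:ℝ)/2) ≤ g t := by
    intro t ht
    have h1 : 0 < m * (t - p) := mul_pos hm (by linarith [ht.1])
    have h3 : (u - V t) ^ (-(1:ℝ)/2) ≤ (m * (t - p)) ^ (-(1:ℝ)/2) :=
      Real.rpow_le_rpow_of_nonpos h1 (h t ht) (by norm_num)
    have h4 : (m * (t - p)) ^ (-(1:ℝ)/2) = g t := Real.mul_rpow hm.le (by linarith [ht.1])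
    rw [← h4]; exact h3
  have hgint : IntegrableOn g (Ioo p q) volume :=
    (intervalIntegrable_iff_integrableOn_Ioo_of_le hpq).mp
      ((intervalIntegrable_rpow_sub p p q).const_mul (m ^ (-(1:ℝ)/2)))
  have hmeas : Measurable fun t => (u - V t) ^ (-(1:ℝ)/2) :=
    (measurable_const.sub hV.measurable).pow measurable_const
  have hint : IntegrableOn (fun t => (u - V t) ^ (-(1:ℝ)/2)) (Ioo p q) volume := by
    apply Integrable.mono hgint (hmeas.aestronglyMeasurable.restrict)
    rw [ae_restrict_iff' measurableSet_Ioo]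
    filter_upwards with t ht
    rw [Real.norm_eq_abs, Real.norm_eq_abs, abs_of_nonneg (rpow_nhalf_nonneg _),
      abs_of_nonneg (mul_nonneg (rpow_nhalf_nonneg m) (rpow_nhalf_nonneg _))]
    exact hptw t ht
  refine ⟨hint, (setIntegral_mono_on hint hgint measurableSet_Ioo hptw).trans ?_⟩
  rw [show ∫ t in Ioo p q, g t = m ^ (-(1:ℝ)/2) * ∫ t in Ioo p q, (t - p) ^ (-(1:ℝ)/2) from
    integral_const_mul _ _]
  rw [show ∫ t in Ioo p q, (t - p) ^ (-(1:ℝ)/2) = 2 * Real.sqrt (q - p) from by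
    rw [← integral_Ioc_eq_integral_Ioo, ← intervalIntegral.integral_of_le hpq,
      integral_rpow_sub, show p - p = 0 from by ring, Real.sqrt_zero]; ring]

set_option maxHeartbeats 2000000 in
/-- Differentiability and positivity of the derivative of the action integral
`𝒜(E) = ∫_{α(E)}^{β(E)} √(E − V(t)) dt` associated with a simple potential well,
with `𝒜'(E) = (1/2)∫_{α(E)}^{β(E)} (E − V(x))^(−1/2) dx` a convergent improper integral. -/
theorem stmt1 (E₁ E₂ : ℝ) (V : ℝ → ℝ) (hV : ContDiff ℝ 2 V) (a b : ℝ) (hab : a < b)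
    (α β : ℝ → ℝ) (hα : ContinuousOn α (Ioo E₁ E₂)) (hβ : ContinuousOn β (Ioo E₁ E₂))
    (hrange : ∀ E ∈ Ioo E₁ E₂, α E ∈ Ioo a b ∧ β E ∈ Ioo a b)
    (hαβ : ∀ E ∈ Ioo E₁ E₂, α E < β E)
    (hVα : ∀ E ∈ Ioo E₁ E₂, V (α E) = E) (hVβ : ∀ E ∈ Ioo E₁ E₂, V (β E) = E)
    (hV'α : ∀ E ∈ Ioo E₁ E₂, deriv V (α E) < 0) (hV'β : ∀ E ∈ Ioo E₁ E₂, 0 < deriv V (β E))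
    (hwell : ∀ E ∈ Ioo E₁ E₂, ∀ x ∈ Icc a b, (V x < E ↔ x ∈ Ioo (α E) (β E))) :
    ∀ E ∈ Ioo E₁ E₂,
      IntegrableOn (fun x => (E - V x) ^ (-(1 : ℝ) / 2)) (Ioo (α E) (β E)) ∧
      HasDerivAt (fun E' => ∫ t in α E'..β E', Real.sqrt (E' - V t))
        ((1 / 2) * ∫ x in Ioo (α E) (β E), (E - V x) ^ (-(1 : ℝ) / 2)) E ∧
      0 < (1 / 2) * ∫ x in Ioo (α E) (β E), (E - V x) ^ (-(1 : ℝ) / 2) := by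
  have hVc : Continuous V := hV.continuous
  have hVd : Differentiable ℝ V := hV.differentiable (by norm_num)
  have hV' : Continuous (deriv V) := hV.continuous_deriv one_le_two
  have hIoo : ∀ e ∈ Ioo E₁ E₂, Ioo (α e) (β e) ⊆ Ioo a b := fun e he =>
    Ioo_subset_Ioo (hrange e he).1.1.le (hrange e he).2.2.le
  -- strict monotonicity of α (anti) and β (mono)
  have hβmono : ∀ e ∈ Ioo E₁ E₂, ∀ e' ∈ Ioo E₁ E₂, e < e' → β e < β e' := by
    intro e he e' he' hlt
    have h1 : β e ∈ Icc a b := Ioo_subset_Icc_self (hrange e he).2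
    have h2 : V (β e) < e' := by rw [hVβ e he]; exact hlt
    exact ((hwell e' he' _ h1).mp h2).2
  have hαmono : ∀ e ∈ Ioo E₁ E₂, ∀ e' ∈ Ioo E₁ E₂, e < e' → α e' < α e := by
    intro e he e' he' hlt
    have h1 : α e ∈ Icc a b := Ioo_subset_Icc_self (hrange e he).1
    have h2 : V (α e) < e' := by rw [hVα e he]; exact hlt
    exact ((hwell e' he' _ h1).mp h2).1
  have hβmono' : ∀ e ∈ Ioo E₁ E₂, ∀ e' ∈ Ioo E₁ E₂, e ≤ e' → β e ≤ β e' := by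
    intro e he e' he' hle
    rcases eq_or_lt_of_le hle with h | h
    · rw [h]
    · exact (hβmono e he e' he' h).le
  have hαmono' : ∀ e ∈ Ioo E₁ E₂, ∀ e' ∈ Ioo E₁ E₂, e ≤ e' → α e' ≤ α e := by
    intro e he e' he' hle
    rcases eq_or_lt_of_le hle with h | h
    · rw [h]
    · exact (hαmono e he e' he' h).le
  have hVge : ∀ e ∈ Ioo E₁ E₂, ∀ t ∈ Ioo a b, t ∉ Ioo (α e) (β e) → e ≤ V t := by
    intro e he t ht hnot
    by_contra hc
    exact hnot ((hwell e he t (Ioo_subset_Icc_self ht)).mp (not_le.mp hc))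
  have hVle : ∀ e ∈ Ioo E₁ E₂, ∀ t ∈ Icc (α e) (β e), V t ≤ e := by
    intro e he t ht
    rcases eq_or_lt_of_le ht.1 with h | h1
    · rw [← h, hVα e he]
    rcases eq_or_lt_of_le ht.2 with h | h2
    · rw [h, hVβ e he]
    have h3 : t ∈ Icc a b := Ioo_subset_Icc_self (hIoo e he ⟨h1, h2⟩)
    exact ((hwell e he t h3).mpr ⟨h1, h2⟩).le
  have hVlt : ∀ e ∈ Ioo E₁ E₂, ∀ t ∈ Ioo (α e) (β e), V t < e := by
    intro e he t ht
    exact (hwell e he t (Ioo_subset_Icc_self (hIoo e he ht))).mpr ht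
  -- congruence of integrals over (a,b) and over the well
  have hsetcongr : ∀ e ∈ Ioo E₁ E₂, ∀ f : ℝ → ℝ,
      (∀ t ∈ Ioo a b, t ∉ Ioo (α e) (β e) → f t = 0) →
      ∫ t in Ioo a b, f t = ∫ t in Ioo (α e) (β e), f t := by
    intro e he f hf
    have h1 : EqOn f ((Ioo (α e) (β e)).indicator f) (Ioo a b) := by
      intro t ht
      by_cases h : t ∈ Ioo (α e) (β e)
      · rw [indicator_of_mem h]
      · rw [indicator_of_notMem h]; exact hf t ht h
    rw [setIntegral_congr_fun measurableSet_Ioo h1,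
      setIntegral_indicator measurableSet_Ioo,
      inter_eq_self_of_subset_right (hIoo e he)]
  -- the candidate derivative integrand
  set G : ℝ → ℝ := fun u => ∫ t in Ioo a b, (u - V t) ^ (-(1:ℝ)/2) with hGdef
  -- zone construction
  have hzone : ∀ e ∈ Ioo E₁ E₂, ∃ m > 0, ∃ δ > 0, Icc (e-δ) (e+δ) ⊆ Ioo E₁ E₂ ∧
      (∀ t ∈ Icc (β (e-δ)) (β (e+δ)), m ≤ deriv V t) ∧
      (∀ t ∈ Icc (α (e+δ)) (α (e-δ)), deriv V t ≤ -m) := by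
    intro e he
    have hminle1 := min_le_left (deriv V (β e)) (-(deriv V (α e)))
    have hminle2 := min_le_right (deriv V (β e)) (-(deriv V (α e)))
    set m : ℝ := min (deriv V (β e)) (-(deriv V (α e))) / 2 with hmdef
    have h1 := hV'β e he
    have h2 := hV'α e he
    have hm : 0 < m := div_pos (lt_min h1 (by linarith)) (by norm_num)
    have hmβ : m < deriv V (β e) := by rw [hmdef]; linarith
    have hmα : deriv V (α e) < -m := by rw [hmdef]; linarith
    obtain ⟨r, hr, hrβ⟩ := Metric.continuousAt_iff.mp (hV'.continuousAt (x := β e))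
      (deriv V (β e) - m) (by linarith)
    obtain ⟨r', hr', hrα⟩ := Metric.continuousAt_iff.mp (hV'.continuousAt (x := α e))
      (-m - deriv V (α e)) (by linarith)
    obtain ⟨dβ, hdβ, hβct⟩ := Metric.continuousAt_iff.mp
      ((hβ.continuousAt (Ioo_mem_nhds he.1 he.2))) r hr
    obtain ⟨dα, hdα, hαct⟩ := Metric.continuousAt_iff.mp
      ((hα.continuousAt (Ioo_mem_nhds he.1 he.2))) r' hr'
    set δ : ℝ := min (min dβ dα) (min (e - E₁) (E₂ - e)) / 2 with hδdef
    have hδ : 0 < δ := by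
      apply div_pos _ (by norm_num)
      exact lt_min (lt_min hdβ hdα) (lt_min (by linarith [he.1]) (by linarith [he.2]))
    have hδ1 : δ < dβ := by
      have := min_le_left (min dβ dα) (min (e - E₁) (E₂ - e))
      have := min_le_left dβ dα
      rw [hδdef]; linarith
    have hδ2 : δ < dα := by
      have := min_le_left (min dβ dα) (min (e - E₁) (E₂ - e))
      have := min_le_right dβ dα
      rw [hδdef]; linarith
    have hδ3 : δ < e - E₁ := by
      have := min_le_right (min dβ dα) (min (e - E₁) (E₂ - e))
      have := min_le_left (e - E₁) (E₂ - e)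
      rw [hδdef]; linarith
    have hδ4 : δ < E₂ - e := by
      have := min_le_right (min dβ dα) (min (e - E₁) (E₂ - e))
      have := min_le_right (e - E₁) (E₂ - e)
      rw [hδdef]; linarith
    refine ⟨m, hm, δ, hδ, ?_, ?_, ?_⟩
    · intro x hx
      exact ⟨by linarith [hx.1], by linarith [hx.2]⟩
    · intro t ht
      have hb1 : dist (e - δ) e < dβ := by
        rw [Real.dist_eq, abs_lt]; constructor <;> linarith
      have hb2 : dist (e + δ) e < dβ := by
        rw [Real.dist_eq, abs_lt]; constructor <;> linarith
      have hc1 := hβct hb1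
      have hc2 := hβct hb2
      rw [Real.dist_eq, abs_lt] at hc1 hc2
      have htd : dist t (β e) < r := by
        rw [Real.dist_eq, abs_lt]
        exact ⟨by linarith [ht.1, hc1.1], by linarith [ht.2, hc2.2]⟩
      have := hrβ htd
      rw [Real.dist_eq, abs_lt] at this
      linarith [this.1]
    · intro t ht
      have hb1 : dist (e - δ) e < dα := by
        rw [Real.dist_eq, abs_lt]; constructor <;> linarith
      have hb2 : dist (e + δ) e < dα := by
        rw [Real.dist_eq, abs_lt]; constructor <;> linarith
      have hc1 := hαct hb1
      have hc2 := hαct hb2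
      rw [Real.dist_eq, abs_lt] at hc1 hc2
      have htd : dist t (α e) < r' := by
        rw [Real.dist_eq, abs_lt]
        exact ⟨by linarith [ht.1, hc2.1], by linarith [ht.2, hc1.2]⟩
      have := hrα htd
      rw [Real.dist_eq, abs_lt] at this
      linarith [this.2]

  -- master decomposition
  have hmaster : ∀ e ∈ Ioo E₁ E₂, ∀ m δ : ℝ, 0 < m → 0 < δ →
      Icc (e-δ) (e+δ) ⊆ Ioo E₁ E₂ →
      (∀ t ∈ Icc (β (e-δ)) (β (e+δ)), m ≤ deriv V t) →
      (∀ t ∈ Icc (α (e+δ)) (α (e-δ)), deriv V t ≤ -m) →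
      ∀ u ∈ Ioo (e-δ) (e+δ),
        IntegrableOn (fun t => (u - V t) ^ (-(1:ℝ)/2)) (Ioo (α u) (β u)) ∧
        G u = (∫ t in Ioc (α u) (α (e-δ)), (u - V t) ^ (-(1:ℝ)/2))
            + (∫ t in Ioc (α (e-δ)) (β (e-δ)), (u - V t) ^ (-(1:ℝ)/2))
            + (∫ t in Ioo (β (e-δ)) (β u), (u - V t) ^ (-(1:ℝ)/2)) ∧
        (0 ≤ ∫ t in Ioc (α u) (α (e-δ)), (u - V t) ^ (-(1:ℝ)/2)) ∧
        (∫ t in Ioc (α u) (α (e-δ)), (u - V t) ^ (-(1:ℝ)/2)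
          ≤ m ^ (-(1:ℝ)/2) * (2 * Real.sqrt (α (e-δ) - α (e+δ)))) ∧
        (0 ≤ ∫ t in Ioo (β (e-δ)) (β u), (u - V t) ^ (-(1:ℝ)/2)) ∧
        (∫ t in Ioo (β (e-δ)) (β u), (u - V t) ^ (-(1:ℝ)/2)
          ≤ m ^ (-(1:ℝ)/2) * (2 * Real.sqrt (β (e+δ) - β (e-δ)))) := by
    intro e he m δ hm hδ hsub hZβ hZα u hu
    have hu' : u ∈ Ioo E₁ E₂ := hsub ⟨hu.1.le, hu.2.le⟩
    have hem : e - δ ∈ Ioo E₁ E₂ := hsub ⟨le_refl _, by linarith⟩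
    have hep : e + δ ∈ Ioo E₁ E₂ := hsub ⟨by linarith, le_refl _⟩
    set f : ℝ → ℝ := fun t => (u - V t) ^ (-(1:ℝ)/2) with hfdef
    have h1 : α u < α (e-δ) := hαmono (e-δ) hem u hu' (by linarith [hu.1])
    have h2 : α (e-δ) < β (e-δ) := hαβ _ hem
    have h3 : β (e-δ) < β u := hβmono (e-δ) hem u hu' (by linarith [hu.1])
    have h4 : α (e+δ) ≤ α u := hαmono' u hu' (e+δ) hep (by linarith [hu.2])
    have h5 : β u ≤ β (e+δ) := hβmono' u hu' (e+δ) hep (by linarith [hu.2])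
    have hL := bound_left V hVc u m (α u) (α (e-δ)) hm h1.le (by
      intro t ht
      have := mvt_left V hVd m (α (e+δ)) (α (e-δ)) hZα t
        ⟨le_trans h4 ht.1.le, ht.2.le⟩ (α u) ⟨h4, h1.le⟩ ht.1.le
      rw [hVα u hu'] at this
      linarith)
    have hR := bound_right V hVc u m (β (e-δ)) (β u) hm h3.le (by
      intro t ht
      have := mvt_right V hVd m (β (e-δ)) (β (e+δ)) hZβ t
        ⟨ht.1.le, le_trans ht.2.le h5⟩ (β u) ⟨h3.le, h5⟩ ht.2.le
      rw [hVβ u hu'] at this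
      linarith)
    have hMpos : ∀ t ∈ Icc (α (e-δ)) (β (e-δ)), 0 < u - V t := by
      intro t ht
      have := hVle (e-δ) hem t ht
      linarith [hu.1]
    have hMcont : ContinuousOn f (Icc (α (e-δ)) (β (e-δ))) := by
      apply ContinuousOn.rpow_const ((continuous_const.sub hVc).continuousOn)
      intro t ht
      exact Or.inl (ne_of_gt (hMpos t ht))
    have hMint : IntegrableOn f (Icc (α (e-δ)) (β (e-δ))) :=
      hMcont.integrableOn_compact isCompact_Icc
    have hMint' : IntegrableOn f (Ioc (α (e-δ)) (β (e-δ))) := hMint.mono_set Ioc_subset_Icc_self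
    have hLint' : IntegrableOn f (Ioc (α u) (α (e-δ))) :=
      (integrableOn_Ioc_iff_integrableOn_Ioo).mpr hL.1
    have hUnion1 : Ioc (α u) (α (e-δ)) ∪ Ioc (α (e-δ)) (β (e-δ)) = Ioc (α u) (β (e-δ)) :=
      Ioc_union_Ioc_eq_Ioc h1.le h2.le
    have hUnion2 : Ioc (α u) (β (e-δ)) ∪ Ioo (β (e-δ)) (β u) = Ioo (α u) (β u) :=
      Ioc_union_Ioo_eq_Ioo (by linarith) h3
    have hint12 : IntegrableOn f (Ioc (α u) (β (e-δ))) := by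
      rw [← hUnion1]; exact hLint'.union hMint'
    have hintAll : IntegrableOn f (Ioo (α u) (β u)) := by
      rw [← hUnion2]; exact hint12.union hR.1
    have hGu : G u = ∫ t in Ioo (α u) (β u), f t :=
      hsetcongr u hu' f (fun t ht hnot =>
        rpow_nhalf_of_nonpos (by linarith [hVge u hu' t ht hnot]))
    have hdisj1 : Disjoint (Ioc (α u) (α (e-δ))) (Ioc (α (e-δ)) (β (e-δ))) :=
      Ioc_disjoint_Ioc_of_le le_rfl
    have hdisj2 : Disjoint (Ioc (α u) (β (e-δ))) (Ioo (β (e-δ)) (β u)) := by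
      apply disjoint_left.mpr
      intro x hx hx'
      exact absurd hx.2 (not_le.mpr hx'.1)
    have hsplit : ∫ t in Ioo (α u) (β u), f t
        = (∫ t in Ioc (α u) (α (e-δ)), f t) + (∫ t in Ioc (α (e-δ)) (β (e-δ)), f t)
          + (∫ t in Ioo (β (e-δ)) (β u), f t) := by
      rw [← hUnion2, setIntegral_union hdisj2 measurableSet_Ioo hint12 hR.1, ← hUnion1,
        setIntegral_union hdisj1 measurableSet_Ioc hLint' hMint']
    refine ⟨hintAll, by rw [hGu, hsplit], ?_, ?_, ?_, ?_⟩
    · exact setIntegral_nonneg measurableSet_Ioc (fun t _ => rpow_nhalf_nonneg _)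
    · rw [integral_Ioc_eq_integral_Ioo]
      refine hL.2.trans ?_
      apply mul_le_mul_of_nonneg_left _ (rpow_nhalf_nonneg m)
      have := Real.sqrt_le_sqrt (show α (e-δ) - α u ≤ α (e-δ) - α (e+δ) by linarith)
      linarith
    · exact setIntegral_nonneg measurableSet_Ioo (fun t _ => rpow_nhalf_nonneg _)
    · refine hR.2.trans ?_
      apply mul_le_mul_of_nonneg_left _ (rpow_nhalf_nonneg m)
      have := Real.sqrt_le_sqrt (show β u - β (e-δ) ≤ β (e+δ) - β (e-δ) by linarith)
      linarith

  have hIntOn : ∀ e ∈ Ioo E₁ E₂,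
      IntegrableOn (fun t => (e - V t) ^ (-(1:ℝ)/2)) (Ioo (α e) (β e)) := by
    intro e he
    obtain ⟨m, hm, δ, hδ, hsub, hZβ, hZα⟩ := hzone e he
    exact (hmaster e he m δ hm hδ hsub hZβ hZα e ⟨by linarith, by linarith⟩).1
  have hGcont : ∀ e ∈ Ioo E₁ E₂, ContinuousAt G e := by
    intro e he
    obtain ⟨m, hm, δ₀, hδ₀, hsub₀, hZβ₀, hZα₀⟩ := hzone e he
    have hC : 0 < m ^ (-(1:ℝ)/2) := Real.rpow_pos_of_pos hm _
    set C := m ^ (-(1:ℝ)/2) with hCdef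
    have hem₀ : e - δ₀ ∈ Ioo E₁ E₂ := hsub₀ ⟨le_refl _, by linarith⟩
    have hep₀ : e + δ₀ ∈ Ioo E₁ E₂ := hsub₀ ⟨by linarith, le_refl _⟩
    rw [ContinuousAt, Metric.tendsto_nhds]
    intro ε hε
    set ρ : ℝ := ((ε/16)/C)^2/2 with hρdef
    have hρ : 0 < ρ := by positivity
    obtain ⟨dβ, hdβ, hβct⟩ := Metric.continuousAt_iff.mp
      (hβ.continuousAt (Ioo_mem_nhds he.1 he.2)) ρ hρ
    obtain ⟨dα, hdα, hαct⟩ := Metric.continuousAt_iff.mp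
      (hα.continuousAt (Ioo_mem_nhds he.1 he.2)) ρ hρ
    set δ : ℝ := min δ₀ (min dβ dα / 2) with hδdef
    have hδ : 0 < δ := lt_min hδ₀ (by positivity)
    have hδle : δ ≤ δ₀ := min_le_left _ _
    have hδβ : δ < dβ := by
      have h1 := min_le_right δ₀ (min dβ dα / 2)
      have h2 := min_le_left dβ dα
      linarith
    have hδα : δ < dα := by
      have h1 := min_le_right δ₀ (min dβ dα / 2)
      have h2 := min_le_right dβ dα
      linarith
    have hsub : Icc (e-δ) (e+δ) ⊆ Ioo E₁ E₂ := fun x hx =>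
      hsub₀ ⟨by linarith [hx.1], by linarith [hx.2]⟩
    have hem : e - δ ∈ Ioo E₁ E₂ := hsub ⟨le_refl _, by linarith⟩
    have hep : e + δ ∈ Ioo E₁ E₂ := hsub ⟨by linarith, le_refl _⟩
    have hZβ : ∀ t ∈ Icc (β (e-δ)) (β (e+δ)), m ≤ deriv V t := by
      intro t ht
      exact hZβ₀ t ⟨le_trans (hβmono' _ hem₀ _ hem (by linarith)) ht.1,
        le_trans ht.2 (hβmono' _ hep _ hep₀ (by linarith))⟩
    have hZα : ∀ t ∈ Icc (α (e+δ)) (α (e-δ)), deriv V t ≤ -m := by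
      intro t ht
      exact hZα₀ t ⟨le_trans (hαmono' _ hep _ hep₀ (by linarith)) ht.1,
        le_trans ht.2 (hαmono' _ hem₀ _ hem (by linarith))⟩
    -- smallness of the endpoint contributions
    have hsmallβ : C * (2 * Real.sqrt (β (e+δ) - β (e-δ))) ≤ ε/8 := by
      have hb1 : |β (e-δ) - β e| < ρ := by
        have := hβct (show dist (e-δ) e < dβ by
          rw [Real.dist_eq, abs_lt]; constructor <;> linarith)
        rwa [Real.dist_eq] at this
      have hb2 : |β (e+δ) - β e| < ρ := by
        have := hβct (show dist (e+δ) e < dβ by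
          rw [Real.dist_eq, abs_lt]; constructor <;> linarith)
        rwa [Real.dist_eq] at this
      rw [abs_lt] at hb1 hb2
      have hx : β (e+δ) - β (e-δ) ≤ 2*ρ := by linarith
      have hs : Real.sqrt (β (e+δ) - β (e-δ)) ≤ (ε/16)/C := by
        have h2ρ : (2:ℝ)*ρ = ((ε/16)/C)^2 := by rw [hρdef]; ring
        calc Real.sqrt (β (e+δ) - β (e-δ)) ≤ Real.sqrt (2*ρ) := Real.sqrt_le_sqrt hx
          _ = (ε/16)/C := by rw [h2ρ, Real.sqrt_sq (by positivity)]
      calc C * (2 * Real.sqrt (β (e+δ) - β (e-δ))) ≤ C * (2 * ((ε/16)/C)) := by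
            apply mul_le_mul_of_nonneg_left (by linarith) hC.le
        _ = ε/8 := by field_simp; ring
    have hsmallα : C * (2 * Real.sqrt (α (e-δ) - α (e+δ))) ≤ ε/8 := by
      have hb1 : |α (e-δ) - α e| < ρ := by
        have := hαct (show dist (e-δ) e < dα by
          rw [Real.dist_eq, abs_lt]; constructor <;> linarith)
        rwa [Real.dist_eq] at this
      have hb2 : |α (e+δ) - α e| < ρ := by
        have := hαct (show dist (e+δ) e < dα by
          rw [Real.dist_eq, abs_lt]; constructor <;> linarith)
        rwa [Real.dist_eq] at this
      rw [abs_lt] at hb1 hb2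
      have hx : α (e-δ) - α (e+δ) ≤ 2*ρ := by linarith
      have hs : Real.sqrt (α (e-δ) - α (e+δ)) ≤ (ε/16)/C := by
        have h2ρ : (2:ℝ)*ρ = ((ε/16)/C)^2 := by rw [hρdef]; ring
        calc Real.sqrt (α (e-δ) - α (e+δ)) ≤ Real.sqrt (2*ρ) := Real.sqrt_le_sqrt hx
          _ = (ε/16)/C := by rw [h2ρ, Real.sqrt_sq (by positivity)]
      calc C * (2 * Real.sqrt (α (e-δ) - α (e+δ))) ≤ C * (2 * ((ε/16)/C)) := by
            apply mul_le_mul_of_nonneg_left (by linarith) hC.le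
        _ = ε/8 := by field_simp; ring
    -- continuity of the middle part
    have hae2 : ∀ᵐ t ∂(volume.restrict (Ioc (α (e-δ)) (β (e-δ)))), t ≠ β (e-δ) := by
      apply ae_restrict_of_ae
      have h0 : {t : ℝ | ¬ t ≠ β (e-δ)} = {β (e-δ)} := by ext x; simp
      rw [ae_iff, h0]; exact measure_singleton _
    have hae1 : ∀ᵐ t ∂(volume.restrict (Ioc (α (e-δ)) (β (e-δ)))),
        t ∈ Ioc (α (e-δ)) (β (e-δ)) := ae_restrict_mem measurableSet_Ioc
    have hAcont : ContinuousAt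
        (fun u => ∫ t in Ioc (α (e-δ)) (β (e-δ)), (u - V t) ^ (-(1:ℝ)/2)) e := by
      apply continuousAt_of_dominated (bound := fun t => ((e-δ) - V t) ^ (-(1:ℝ)/2))
      · filter_upwards with u
        exact ((measurable_const.sub hVc.measurable).pow
          measurable_const).aestronglyMeasurable.restrict
      · filter_upwards [isOpen_Ioo.eventually_mem
          (show e ∈ Ioo (e-δ) (e+δ) from ⟨by linarith, by linarith⟩)] with u hu
        filter_upwards [hae1, hae2] with t hmem hne
        have htIoo : t ∈ Ioo (α (e-δ)) (β (e-δ)) := ⟨hmem.1, lt_of_le_of_ne hmem.2 hne⟩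
        have hVt : V t < e - δ := hVlt (e-δ) hem t htIoo
        rw [Real.norm_eq_abs, abs_of_nonneg (rpow_nhalf_nonneg _)]
        exact Real.rpow_le_rpow_of_nonpos (by linarith) (by linarith [hu.1]) (by norm_num)
      · exact (integrableOn_Ioc_iff_integrableOn_Ioo).mpr (hIntOn (e-δ) hem)
      · filter_upwards [hae1, hae2] with t hmem hne
        have htIoo : t ∈ Ioo (α (e-δ)) (β (e-δ)) := ⟨hmem.1, lt_of_le_of_ne hmem.2 hne⟩
        have hVt : V t < e - δ := hVlt (e-δ) hem t htIoo
        have hpos : (0:ℝ) < e - V t := by linarith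
        exact (continuousAt_id.sub continuousAt_const).rpow_const (Or.inl (ne_of_gt hpos))
    -- combine
    have hev2 := (Metric.tendsto_nhds.mp hAcont) (ε/2) (by linarith)
    filter_upwards [isOpen_Ioo.eventually_mem
      (show e ∈ Ioo (e-δ) (e+δ) from ⟨by linarith, by linarith⟩), hev2] with u hu hAu
    obtain ⟨-, hdecu, hLu0, hLub, hRu0, hRub⟩ :=
      hmaster e he m δ hm hδ hsub hZβ hZα u hu
    obtain ⟨-, hdece, hLe0, hLeb, hRe0, hReb⟩ :=
      hmaster e he m δ hm hδ hsub hZβ hZα e ⟨by linarith, by linarith⟩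
    simp only [Real.dist_eq] at hAu ⊢
    set Lu := ∫ t in Ioc (α u) (α (e-δ)), (u - V t) ^ (-(1:ℝ)/2) with hLu
    set Ru := ∫ t in Ioo (β (e-δ)) (β u), (u - V t) ^ (-(1:ℝ)/2) with hRu
    set Le := ∫ t in Ioc (α e) (α (e-δ)), (e - V t) ^ (-(1:ℝ)/2) with hLe
    set Re := ∫ t in Ioo (β (e-δ)) (β e), (e - V t) ^ (-(1:ℝ)/2) with hRe
    set Mu := ∫ t in Ioc (α (e-δ)) (β (e-δ)), (u - V t) ^ (-(1:ℝ)/2) with hMu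
    set Me := ∫ t in Ioc (α (e-δ)) (β (e-δ)), (e - V t) ^ (-(1:ℝ)/2) with hMe
    have hLu2 : Lu ≤ ε/8 := hLub.trans hsmallα
    have hRu2 : Ru ≤ ε/8 := hRub.trans hsmallβ
    have hLe2 : Le ≤ ε/8 := hLeb.trans hsmallα
    have hRe2 : Re ≤ ε/8 := hReb.trans hsmallβ
    rw [hdecu, hdece]
    rw [abs_lt] at hAu ⊢
    constructor
    · linarith [hAu.1]
    · linarith [hAu.2]

  -- Fubini
  set F : ℝ → ℝ := fun x => ∫ t in Ioo a b, Real.sqrt (x - V t) with hFdef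
  have hfub : ∀ e₀ ∈ Ioo E₁ E₂, ∀ e' ∈ Ioo E₁ E₂, e₀ < e' →
      (F e' - F e₀ = (1/2) * ∫ u in Ioo e₀ e', G u) ∧ IntegrableOn G (Ioo e₀ e') := by
    intro e₀ he₀ e' he' hlt
    have hf2meas : AEStronglyMeasurable (fun p : ℝ × ℝ => (p.2 - V p.1) ^ (-(1:ℝ)/2))
        ((volume.restrict (Ioo a b)).prod (volume.restrict (Ioo e₀ e'))) :=
      ((measurable_snd.sub (hVc.measurable.comp measurable_fst)).pow
        measurable_const).aestronglyMeasurable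
    have hslice : ∀ t : ℝ, IntegrableOn (fun u => (u - V t) ^ (-(1:ℝ)/2)) (Ioo e₀ e') := fun t =>
      (intervalIntegrable_iff_integrableOn_Ioo_of_le hlt.le).mp
        (intervalIntegrable_rpow_sub (V t) e₀ e')
    have hinner : ∀ t : ℝ, (∫ u in Ioo e₀ e', (u - V t) ^ (-(1:ℝ)/2))
        = 2 * Real.sqrt (e' - V t) - 2 * Real.sqrt (e₀ - V t) := by
      intro t
      rw [← integral_Ioc_eq_integral_Ioo, ← intervalIntegral.integral_of_le hlt.le,
        integral_rpow_sub]
    have hsqrtcont : ∀ x : ℝ, Continuous (fun t => Real.sqrt (x - V t)) := fun x =>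
      Real.continuous_sqrt.comp (continuous_const.sub hVc)
    have hsqrtint : ∀ x : ℝ, IntegrableOn (fun t => Real.sqrt (x - V t)) (Ioo a b) := fun x =>
      ((hsqrtcont x).integrableOn_Ioc).mono_set Ioo_subset_Ioc_self
    have hprod : Integrable (fun p : ℝ × ℝ => (p.2 - V p.1) ^ (-(1:ℝ)/2))
        ((volume.restrict (Ioo a b)).prod (volume.restrict (Ioo e₀ e'))) := by
      rw [integrable_prod_iff hf2meas]
      constructor
      · filter_upwards with t
        exact hslice t
      · have heq : (fun t => ∫ u in Ioo e₀ e', ‖(u - V t) ^ (-(1:ℝ)/2)‖)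
            = fun t => 2 * Real.sqrt (e' - V t) - 2 * Real.sqrt (e₀ - V t) := by
          funext t
          rw [← hinner t]
          refine setIntegral_congr_fun measurableSet_Ioo (fun u _ => ?_)
          exact Real.norm_of_nonneg (rpow_nhalf_nonneg _)
        show Integrable (fun t => ∫ u in Ioo e₀ e', ‖(u - V t) ^ (-(1:ℝ)/2)‖)
          (volume.restrict (Ioo a b))
        rw [heq]
        exact ((continuous_const.mul (hsqrtcont e')).sub
          (continuous_const.mul (hsqrtcont e₀))).integrableOn_Ioc.mono_set Ioo_subset_Ioc_self
    constructor
    · have hswap := integral_integral_swap (f := fun t u => (u - V t) ^ (-(1:ℝ)/2))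
        (μ := volume.restrict (Ioo a b)) (ν := volume.restrict (Ioo e₀ e')) hprod
      have hL : (∫ t in Ioo a b, ∫ u in Ioo e₀ e', (u - V t) ^ (-(1:ℝ)/2))
          = 2 * F e' - 2 * F e₀ := by
        rw [show (fun t => ∫ u in Ioo e₀ e', (u - V t) ^ (-(1:ℝ)/2))
            = fun t => 2 * Real.sqrt (e' - V t) - 2 * Real.sqrt (e₀ - V t) from funext hinner]
        rw [integral_sub ((hsqrtint e').const_mul 2) ((hsqrtint e₀).const_mul 2),
          integral_const_mul, integral_const_mul]
      rw [hL] at hswap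
      have : (∫ u in Ioo e₀ e', G u) = 2 * F e' - 2 * F e₀ := by rw [← hswap]
      rw [this]; ring
    · exact hprod.integral_prod_right

  -- conclusion
  intro E hE
  have hGE : G E = ∫ x in Ioo (α E) (β E), (E - V x) ^ (-(1:ℝ)/2) :=
    hsetcongr E hE _ (fun t ht hnot => rpow_nhalf_of_nonpos
      (by linarith [hVge E hE t ht hnot]))
  refine ⟨hIntOn E hE, ?_, ?_⟩
  · set E₀ := (E₁ + E)/2 with hE₀def
    have hE₀ : E₀ ∈ Ioo E₁ E₂ := ⟨by linarith [hE.1], by linarith [hE.1, hE.2]⟩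
    have hE₀E : E₀ < E := by linarith [hE.1]
    have hGIoo : IntegrableOn G (Ioo E₀ E) := (hfub E₀ hE₀ E hE hE₀E).2
    have hGint : IntervalIntegrable G volume E₀ E :=
      (intervalIntegrable_iff_integrableOn_Ioo_of_le hE₀E.le).mpr hGIoo
    have hGsm : StronglyMeasurableAtFilter G (𝓝 E) volume :=
      ContinuousOn.stronglyMeasurableAtFilter isOpen_Ioo
        (fun x hx => (hGcont x hx).continuousWithinAt) E hE
    have hD := intervalIntegral.integral_hasDerivAt_right hGint hGsm (hGcont E hE)
    have hD2 : HasDerivAt (fun x => F E₀ + (1/2) * ∫ u in E₀..x, G u) ((1/2) * G E) E :=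
      (HasDerivAt.const_mul (1/2 : ℝ) hD).const_add (F E₀)
    have hEq : (fun E' => ∫ t in α E'..β E', Real.sqrt (E' - V t))
        =ᶠ[𝓝 E] fun x => F E₀ + (1/2) * ∫ u in E₀..x, G u := by
      filter_upwards [isOpen_Ioo.eventually_mem
        (show E ∈ Ioo E₀ E₂ from ⟨hE₀E, hE.2⟩)] with E' hE'
      have hE'm : E' ∈ Ioo E₁ E₂ := ⟨lt_trans hE₀.1 hE'.1, hE'.2⟩
      have h1 : ∫ t in α E'..β E', Real.sqrt (E' - V t) = F E' := by
        rw [intervalIntegral.integral_of_le (hαβ E' hE'm).le, integral_Ioc_eq_integral_Ioo]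
        exact (hsetcongr E' hE'm (fun t => Real.sqrt (E' - V t)) (fun t ht hnot =>
          Real.sqrt_eq_zero'.mpr (by linarith [hVge E' hE'm t ht hnot]))).symm
      have h2 : F E' = F E₀ + (1/2) * ∫ u in E₀..E', G u := by
        have h3 := (hfub E₀ hE₀ E' hE'm hE'.1).1
        rw [intervalIntegral.integral_of_le hE'.1.le, integral_Ioc_eq_integral_Ioo]
        linarith
      rw [h1, h2]
    rw [← hGE]
    exact hD2.congr_of_eventuallyEq hEq
  · have hpos : 0 < ∫ x in Ioo (α E) (β E), (E - V x) ^ (-(1:ℝ)/2) := by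
      rw [setIntegral_pos_iff_support_of_nonneg_ae
        (Filter.Eventually.of_forall fun x => rpow_nhalf_nonneg _) (hIntOn E hE)]
      have hsub2 : Ioo (α E) (β E)
          ⊆ Function.support (fun x => (E - V x) ^ (-(1:ℝ)/2)) ∩ Ioo (α E) (β E) := by
        intro x hx
        refine ⟨Function.mem_support.mpr (ne_of_gt (Real.rpow_pos_of_pos ?_ _)), hx⟩
        have := hVlt E hE x hx
        linarith
      calc (0:ENNReal) < volume (Ioo (α E) (β E)) := by
            rw [Real.volume_Ioo]
            exact ENNReal.ofReal_pos.mpr (by linarith [hαβ E hE])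
        _ ≤ volume (Function.support (fun x => (E - V x) ^ (-(1:ℝ)/2)) ∩ Ioo (α E) (β E)) :=
            measure_mono hsub2
    linarith
end

section
/- Let q₁, q₂ : ℝ² → ℝ be twice continuously differentiable and r : ℝ² → ℂ continuous, with q₁(0, 0) = q₂(0, 0) = 0, ∂_ξ q₁(0, 0) ≠ 0 and {q₁, q₂}(0, 0) ≠ 0, where {q₁, q₂} := ∂_ξ q₁ ∂_x q₂ − ∂_x q₁ ∂_ξ q₂. Let φ be twice continuously differentiable near 0 with φ(0) = φ'(0) = 0 and q₁(x, φ'(x)) = 0 for all x near 0, and let a₀ be a continuous function with a₀(0) = 1. Then for all small x ≠ 0 one has q₂(x, φ'(x)) ≠ 0, and the function b(x) := − ( conj(r(x, φ'(x))) / q₂(x, φ'(x)) ) a₀(x) satisfies lim_{x→0} x·b(x) = − ∂_ξ q₁(0, 0)·conj(r(0, 0)) / {q₁, q₂}(0, 0); i.e., b has a simple pole at x = 0 with this residue-type coefficient. -/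
open Set Filter

/-- The subleading WKB amplitude `b = −(conj r/q₂)a₀` along the phase `φ` solving the
eikonal equation `q₁(x, φ'(x)) = 0` through a transversal crossing point has a simple pole
at `x = 0`: `q₂(x, φ'(x)) ≠ 0` for small `x ≠ 0` and
`x·b(x) → −∂_ξ q₁(0,0)·conj(r(0,0))/{q₁, q₂}(0,0)` as `x → 0`. -/
theorem stmt12 (q₁ q₂ : ℝ × ℝ → ℝ) (r : ℝ × ℝ → ℂ)
    (hq₁ : ContDiff ℝ 2 q₁) (hq₂ : ContDiff ℝ 2 q₂) (hr : Continuous r)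
    (h10 : q₁ (0, 0) = 0) (h20 : q₂ (0, 0) = 0)
    (hξ : deriv (fun η => q₁ (0, η)) 0 ≠ 0)
    (hpb : deriv (fun η => q₁ (0, η)) 0 * deriv (fun x => q₂ (x, 0)) 0 -
        deriv (fun x => q₁ (x, 0)) 0 * deriv (fun η => q₂ (0, η)) 0 ≠ 0)
    (δ : ℝ) (hδ : 0 < δ) (φ : ℝ → ℝ) (hφ : ContDiffOn ℝ 2 φ (Ioo (-δ) δ))
    (hφ0 : φ 0 = 0) (hφ'0 : deriv φ 0 = 0)
    (heik : ∀ x ∈ Ioo (-δ) δ, q₁ (x, deriv φ x) = 0)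
    (a₀ : ℝ → ℝ) (ha₀ : Continuous a₀) (ha₀0 : a₀ 0 = 1) :
    (∃ δ' > 0, ∀ x : ℝ, x ≠ 0 → |x| < δ' → q₂ (x, deriv φ x) ≠ 0) ∧
    Tendsto
      (fun x : ℝ => (x : ℂ) *
        (-(starRingEnd ℂ (r (x, deriv φ x)) / (q₂ (x, deriv φ x) : ℂ)) * (a₀ x : ℂ)))
      (nhdsWithin 0 {(0 : ℝ)}ᶜ)
      (nhds (-((deriv (fun η => q₁ (0, η)) 0 : ℂ) * starRingEnd ℂ (r (0, 0)) /
        ((deriv (fun η => q₁ (0, η)) 0 * deriv (fun x => q₂ (x, 0)) 0 -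
          deriv (fun x => q₁ (x, 0)) 0 * deriv (fun η => q₂ (0, η)) 0 : ℝ) : ℂ)))) := by
  have hq₁d : DifferentiableAt ℝ q₁ ((0:ℝ),(0:ℝ)) :=
    (hq₁.differentiable (by norm_num)).differentiableAt
  have hq₂d : DifferentiableAt ℝ q₂ ((0:ℝ),(0:ℝ)) :=
    (hq₂.differentiable (by norm_num)).differentiableAt
  set ψ : ℝ → ℝ := deriv φ with hψdef
  have hψ0 : ψ 0 = 0 := hφ'0
  have hopen : IsOpen (Ioo (-δ) δ) := isOpen_Ioo
  have h0mem : (0:ℝ) ∈ Ioo (-δ) δ := ⟨by linarith, hδ⟩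
  have hψC1 : ContDiffOn ℝ 1 ψ (Ioo (-δ) δ) := hφ.deriv_of_isOpen hopen (by norm_num)
  have hψdiff : DifferentiableAt ℝ ψ 0 :=
    (hψC1.differentiableOn one_ne_zero).differentiableAt (hopen.mem_nhds h0mem)
  set m := deriv ψ 0 with hm
  have hψd : HasDerivAt ψ m 0 := hψdiff.hasDerivAt
  have hinner : HasDerivAt (fun x : ℝ => (x, ψ x)) (1, m) 0 :=
    (hasDerivAt_id 0).prodMk hψd
  -- identify the partial derivatives with fderiv values
  set A := deriv (fun x => q₁ (x, 0)) 0 with hAdef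
  set B := deriv (fun η => q₁ (0, η)) 0 with hBdef
  set C := deriv (fun x => q₂ (x, 0)) 0 with hCdef
  set D := deriv (fun η => q₂ (0, η)) 0 with hDdef
  have hx0 : HasDerivAt (fun x : ℝ => (x, (0:ℝ))) ((1:ℝ),(0:ℝ)) 0 :=
    (hasDerivAt_id 0).prodMk (hasDerivAt_const 0 0)
  have hy0 : HasDerivAt (fun η : ℝ => ((0:ℝ), η)) ((0:ℝ),(1:ℝ)) 0 :=
    (hasDerivAt_const 0 0).prodMk (hasDerivAt_id 0)
  have hfx1 : HasFDerivAt q₁ (fderiv ℝ q₁ (0,0)) ((fun x : ℝ => (x,(0:ℝ))) 0) :=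
    hq₁d.hasFDerivAt
  have hfy1 : HasFDerivAt q₁ (fderiv ℝ q₁ (0,0)) ((fun η : ℝ => ((0:ℝ),η)) 0) :=
    hq₁d.hasFDerivAt
  have hfx2 : HasFDerivAt q₂ (fderiv ℝ q₂ (0,0)) ((fun x : ℝ => (x,(0:ℝ))) 0) :=
    hq₂d.hasFDerivAt
  have hfy2 : HasFDerivAt q₂ (fderiv ℝ q₂ (0,0)) ((fun η : ℝ => ((0:ℝ),η)) 0) :=
    hq₂d.hasFDerivAt
  have hAd : HasDerivAt (fun x : ℝ => q₁ (x, 0)) (fderiv ℝ q₁ (0,0) (1,0)) 0 :=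
    hfx1.comp_hasDerivAt_of_eq 0 hx0 rfl
  have hBd : HasDerivAt (fun η : ℝ => q₁ (0, η)) (fderiv ℝ q₁ (0,0) (0,1)) 0 :=
    hfy1.comp_hasDerivAt_of_eq 0 hy0 rfl
  have hCd : HasDerivAt (fun x : ℝ => q₂ (x, 0)) (fderiv ℝ q₂ (0,0) (1,0)) 0 :=
    hfx2.comp_hasDerivAt_of_eq 0 hx0 rfl
  have hDd : HasDerivAt (fun η : ℝ => q₂ (0, η)) (fderiv ℝ q₂ (0,0) (0,1)) 0 :=
    hfy2.comp_hasDerivAt_of_eq 0 hy0 rfl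
  have hA : A = fderiv ℝ q₁ (0,0) (1,0) := hAd.deriv
  have hB : B = fderiv ℝ q₁ (0,0) (0,1) := hBd.deriv
  have hC : C = fderiv ℝ q₂ (0,0) (1,0) := hCd.deriv
  have hD : D = fderiv ℝ q₂ (0,0) (0,1) := hDd.deriv
  have hsplit : ((1:ℝ), m) = ((1:ℝ),(0:ℝ)) + m • ((0:ℝ),(1:ℝ)) := by
    simp [Prod.ext_iff]
  have hF1 : HasFDerivAt q₁ (fderiv ℝ q₁ (0,0)) ((0:ℝ), ψ 0) := by
    rw [hψ0]; exact hq₁d.hasFDerivAt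
  have hF2 : HasFDerivAt q₂ (fderiv ℝ q₂ (0,0)) ((0:ℝ), ψ 0) := by
    rw [hψ0]; exact hq₂d.hasFDerivAt
  have hchain1 : HasDerivAt (fun x => q₁ (x, ψ x)) (A + m * B) 0 := by
    have h := hF1.comp_hasDerivAt_of_eq 0 hinner rfl
    have hval : fderiv ℝ q₁ (0,0) (1, m) = A + m * B := by
      rw [hsplit, map_add, map_smul, hA, hB]; simp [smul_eq_mul]
    rwa [hval] at h
  have hchain2 : HasDerivAt (fun x => q₂ (x, ψ x)) (C + m * D) 0 := by
    have h := hF2.comp_hasDerivAt_of_eq 0 hinner rfl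
    have hval : fderiv ℝ q₂ (0,0) (1, m) = C + m * D := by
      rw [hsplit, map_add, map_smul, hC, hD]; simp [smul_eq_mul]
    rwa [hval] at h
  -- the eikonal equation forces A + m*B = 0
  have hzero : HasDerivAt (fun x => q₁ (x, ψ x)) 0 0 := by
    have heq : (fun _ : ℝ => (0:ℝ)) =ᶠ[nhds 0] fun x => q₁ (x, ψ x) := by
      filter_upwards [hopen.mem_nhds h0mem] with x hx
      exact (heik x hx).symm
    exact (hasDerivAt_const 0 (0:ℝ)).congr_of_eventuallyEq heq.symm
  have hmB : A + m * B = 0 := hchain1.unique hzero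
  have hmval : m = -A / B := by field_simp; linarith
  set L := C + m * D with hLdef
  have hL : L = (B * C - A * D) / B := by
    rw [hLdef, hmval]; field_simp; ring
  have hLne : L ≠ 0 := by
    rw [hL]; exact div_ne_zero hpb hξ
  -- slope limit for q₂ along the curve
  have hslope : Tendsto (fun x => q₂ (x, ψ x) / x) (nhdsWithin 0 {(0:ℝ)}ᶜ) (nhds L) := by
    have h := hasDerivAt_iff_tendsto_slope.mp hchain2
    have : (slope (fun x => q₂ (x, ψ x)) 0) = fun x => q₂ (x, ψ x) / x := by
      funext x
      have h20' : q₂ 0 = 0 := h20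
      simp [slope_def_field, hψ0, h20', h20]
    rwa [this] at h
  constructor
  · -- nonvanishing
    have hev : ∀ᶠ x in nhdsWithin 0 {(0:ℝ)}ᶜ, q₂ (x, ψ x) / x ≠ 0 :=
      hslope.eventually_ne hLne
    rw [eventually_nhdsWithin_iff, Metric.eventually_nhds_iff] at hev
    obtain ⟨ε, hε, h⟩ := hev
    refine ⟨ε, hε, fun x hx hxε => ?_⟩
    have := h (by simpa [Real.dist_eq] using hxε) hx
    intro h0
    exact this (by simp [h0])
  · -- the limit
    have hinv : Tendsto (fun x => x / q₂ (x, ψ x)) (nhdsWithin 0 {(0:ℝ)}ᶜ) (nhds L⁻¹) := by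
      have h := hslope.inv₀ hLne
      simpa [inv_div] using h
    have hinvC : Tendsto (fun x => ((x / q₂ (x, ψ x) : ℝ) : ℂ)) (nhdsWithin 0 {(0:ℝ)}ᶜ)
        (nhds ((L⁻¹ : ℝ) : ℂ)) := (Complex.continuous_ofReal.tendsto _).comp hinv
    have hpair : ContinuousAt (fun x : ℝ => (x, ψ x)) 0 :=
      continuousAt_id.prodMk hψdiff.continuousAt
    have hrc : Tendsto (fun x : ℝ => starRingEnd ℂ (r (x, ψ x))) (nhdsWithin 0 {(0:ℝ)}ᶜ)
        (nhds (starRingEnd ℂ (r (0, 0)))) := by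
      have : ContinuousAt (fun x : ℝ => starRingEnd ℂ (r (x, ψ x))) 0 := by
        apply ContinuousAt.comp _ ((hr.continuousAt).comp hpair)
        · exact (continuous_star).continuousAt
      have h := this.tendsto.mono_left (nhdsWithin_le_nhds (s := {(0:ℝ)}ᶜ))
      simpa [hψ0] using h
    have ha : Tendsto (fun x : ℝ => ((a₀ x : ℝ) : ℂ)) (nhdsWithin 0 {(0:ℝ)}ᶜ) (nhds 1) := by
      have : ContinuousAt (fun x : ℝ => ((a₀ x : ℝ) : ℂ)) 0 :=
        Complex.continuous_ofReal.continuousAt.comp ha₀.continuousAt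
      have h := this.tendsto.mono_left (nhdsWithin_le_nhds (s := {(0:ℝ)}ᶜ))
      simpa [ha₀0] using h
    have hmain : Tendsto
        (fun x : ℝ => -(starRingEnd ℂ (r (x, ψ x))) * ((a₀ x : ℝ) : ℂ) *
          ((x / q₂ (x, ψ x) : ℝ) : ℂ))
        (nhdsWithin 0 {(0:ℝ)}ᶜ)
        (nhds (-(starRingEnd ℂ (r (0, 0))) * 1 * ((L⁻¹ : ℝ) : ℂ))) :=
      ((hrc.neg).mul ha).mul hinvC
    have hfun : (fun x : ℝ => (x : ℂ) *
        (-(starRingEnd ℂ (r (x, ψ x)) / (q₂ (x, ψ x) : ℂ)) * (a₀ x : ℂ))) =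
        fun x : ℝ => -(starRingEnd ℂ (r (x, ψ x))) * ((a₀ x : ℝ) : ℂ) *
          ((x / q₂ (x, ψ x) : ℝ) : ℂ) := by
      funext x
      push_cast
      ring
    rw [hfun]
    have hval : (-(starRingEnd ℂ (r (0, 0))) * 1 * ((L⁻¹ : ℝ) : ℂ)) =
        -((B : ℂ) * starRingEnd ℂ (r (0, 0)) / ((B * C - A * D : ℝ) : ℂ)) := by
      rw [hL]
      have hBc : (B : ℂ) ≠ 0 := by exact_mod_cast hξ
      have hpbc : ((B * C - A * D : ℝ) : ℂ) ≠ 0 := by exact_mod_cast hpb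
      push_cast
      field_simp
    have hBt : HasDerivAt (fun η : ℝ => q₁ (0, η)) B 0 := by rw [hB]; exact hBd
    have hBC : deriv (fun η : ℝ => ((q₁ (0, η) : ℝ) : ℂ)) 0 = (B : ℂ) :=
      hBt.ofReal_comp.deriv
    rw [show deriv (fun η : ℝ => ((q₁ (0, η) : ℝ) : ℂ)) 0 = (B : ℂ) from hBC, ← hval]
    exact hmain
end

section
/- Let C ≥ 0. There exists C' ≥ 0, depending only on C, such that the following holds for all h ∈ (0, 1]. Let u_{1L}, u_{1R}, u_{2L}, u_{2R}, d_{1L}, d_{1R}, d_{2L}, d_{2R} ∈ ℂ with |u_{jS}| ≤ C h^{1/6} and |d_{jS}| ≤ C h^{−5/6} for j ∈ {1,2}, S ∈ {L,R}. Let M be a 4×4 complex matrix of the form M = M₀ + R, where M₀ is the matrix with columns (u_{1L}, 0, d_{1L}, 0), (0, u_{2L}, 0, d_{2L}), (u_{1R}, 0, d_{1R}, 0), (0, u_{2R}, 0, d_{2R}), and the error matrix R satisfies |R_{kl}| ≤ C h^{1/3} for k ∈ {1, 2} and |R_{kl}| ≤ C h^{−2/3} for k ∈ {3, 4} (all l).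 Then | det M − (u_{1L} d_{1R} − d_{1L} u_{1R})(u_{2L} d_{2R} − d_{2L} u_{2R}) | ≤ C' h^{−7/6}. -/
lemma det_abs_bound (N : Matrix (Fin 4) (Fin 4) ℂ) (b : Fin 4 → ℝ)
    (hN : ∀ i l, ‖N i l‖ ≤ b i) :
    ‖N.det‖ ≤ 24 * (b 0 * b 1 * b 2 * b 3) := by
  rw [Matrix.det_apply]
  calc ‖∑ σ : Equiv.Perm (Fin 4), Equiv.Perm.sign σ • ∏ i, N (σ i) i‖
      ≤ ∑ σ : Equiv.Perm (Fin 4), ‖Equiv.Perm.sign σ • ∏ i, N (σ i) i‖ :=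
        norm_sum_le _ _
    _ ≤ ∑ σ : Equiv.Perm (Fin 4), (b 0 * b 1 * b 2 * b 3) := by
        apply Finset.sum_le_sum
        intro σ _
        have h1 : ‖Equiv.Perm.sign σ • ∏ i, N (σ i) i‖
            = ‖∏ i, N (σ i) i‖ := by
          rcases Int.units_eq_one_or (Equiv.Perm.sign σ) with h | h <;> simp [h]
        rw [h1, norm_prod]
        calc (∏ i, ‖N (σ i) i‖) ≤ ∏ i, b (σ i) := by
              apply Finset.prod_le_prod (fun i _ => norm_nonneg _)
              intro i _; exact hN _ _
          _ = ∏ i, b i := Equiv.prod_comp σ b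
          _ = b 0 * b 1 * b 2 * b 3 := by rw [Fin.prod_univ_four]
    _ = 24 * (b 0 * b 1 * b 2 * b 3) := by
        rw [Finset.sum_const, nsmul_eq_mul]
        norm_num [Finset.card_univ, Fintype.card_perm, Nat.factorial]

set_option maxHeartbeats 1000000 in
/-- Determinant perturbation estimate for the 4×4 Wronskian matrix of the four constructed
solutions: with values of size `h^{1/6}`, derivatives of size `h^{−5/6}`, and error entries
of size `h^{1/3}` (value rows) and `h^{−2/3}` (derivative rows), the determinant equals the
product of the two scalar 2×2 Wronskians up to `O(h^{−7/6})`. -/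
theorem stmt17 (C : ℝ) (hC : 0 ≤ C) :
    ∃ C' : ℝ, 0 ≤ C' ∧ ∀ h : ℝ, 0 < h → h ≤ 1 →
      ∀ u1L u1R u2L u2R d1L d1R d2L d2R : ℂ,
      ‖u1L‖ ≤ C * h ^ ((1 : ℝ) / 6) → ‖u1R‖ ≤ C * h ^ ((1 : ℝ) / 6) →
      ‖u2L‖ ≤ C * h ^ ((1 : ℝ) / 6) → ‖u2R‖ ≤ C * h ^ ((1 : ℝ) / 6) →
      ‖d1L‖ ≤ C * h ^ (-(5 : ℝ) / 6) → ‖d1R‖ ≤ C * h ^ (-(5 : ℝ) / 6) →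
      ‖d2L‖ ≤ C * h ^ (-(5 : ℝ) / 6) → ‖d2R‖ ≤ C * h ^ (-(5 : ℝ) / 6) →
      ∀ M R : Matrix (Fin 4) (Fin 4) ℂ,
      M = !![u1L, 0, u1R, 0; 0, u2L, 0, u2R; d1L, 0, d1R, 0; 0, d2L, 0, d2R] + R →
      (∀ l : Fin 4, ‖R 0 l‖ ≤ C * h ^ ((1 : ℝ) / 3)) →
      (∀ l : Fin 4, ‖R 1 l‖ ≤ C * h ^ ((1 : ℝ) / 3)) →
      (∀ l : Fin 4, ‖R 2 l‖ ≤ C * h ^ (-(2 : ℝ) / 3)) →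
      (∀ l : Fin 4, ‖R 3 l‖ ≤ C * h ^ (-(2 : ℝ) / 3)) →
      ‖M.det - (u1L * d1R - d1L * u1R) * (u2L * d2R - d2L * u2R)‖
        ≤ C' * h ^ (-(7 : ℝ) / 6) := by
  refine ⟨360 * C ^ 4, by positivity, ?_⟩
  intro h hh0 hh1 u1L u1R u2L u2R d1L d1R d2L d2R hu1L hu1R hu2L hu2R hd1L hd1R hd2L hd2R
    M R hM hR0 hR1 hR2 hR3
  set M₀ : Matrix (Fin 4) (Fin 4) ℂ :=
    !![u1L, 0, u1R, 0; 0, u2L, 0, u2R; d1L, 0, d1R, 0; 0, d2L, 0, d2R] with hM₀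
  have hdet0 : M₀.det = (u1L * d1R - d1L * u1R) * (u2L * d2R - d2L * u2R) := by
    rw [hM₀]
    simp [Matrix.det_succ_row_zero, Fin.sum_univ_succ, Fin.succAbove]
    ring
  -- exponent vector for main rows
  set a : Fin 4 → ℝ := ![1/6, 1/6, -5/6, -5/6] with ha
  have hMrow : ∀ i l : Fin 4, ‖M₀ i l‖ ≤ C * h ^ (a i) := by
    intro i l
    fin_cases i <;> fin_cases l <;> simp [hM₀, ha] <;> norm_num <;>
      first
        | positivity
        | assumption
        | (rw [show (-(5/6):ℝ) = -5/6 by norm_num]; assumption)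
  have hRrow : ∀ i l : Fin 4, ‖R i l‖ ≤ C * h ^ (a i + 1/6) := by
    intro i l
    fin_cases i
    · exact le_trans (hR0 l) (le_of_eq (by norm_num [ha]))
    · exact le_trans (hR1 l) (le_of_eq (by norm_num [ha]))
    · exact le_trans (hR2 l) (le_of_eq (by norm_num [ha]))
    · exact le_trans (hR3 l) (le_of_eq (by norm_num [ha]))
  -- multilinear expansion of det over rows
  have hexp : M.det = ∑ s : Finset (Fin 4), Matrix.det (s.piecewise M₀ R) := by
    rw [hM]
    exact (Matrix.detRowAlternating (R := ℂ) (n := Fin 4)).toMultilinearMap.map_add_univ M₀ R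
  have hsplit : M.det = M₀.det + ∑ s ∈ (Finset.univ : Finset (Finset (Fin 4))).erase Finset.univ,
      Matrix.det (s.piecewise M₀ R) := by
    rw [hexp, ← Finset.add_sum_erase _ _ (Finset.mem_univ (Finset.univ : Finset (Fin 4))),
      show Finset.univ.piecewise M₀ R = M₀ from Finset.piecewise_univ _ _]
  -- bound each non-principal term
  have hterm : ∀ s ∈ (Finset.univ : Finset (Finset (Fin 4))).erase Finset.univ,
      ‖Matrix.det (s.piecewise M₀ R)‖ ≤ 24 * (C ^ 4 * h ^ (-(7:ℝ)/6)) := by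
    intro s hs
    have hsne : s ≠ Finset.univ := Finset.ne_of_mem_erase hs
    obtain ⟨j, hj⟩ : ∃ j, j ∉ s := by
      by_contra hcon
      push_neg at hcon
      exact hsne (Finset.eq_univ_iff_forall.2 hcon)
    set b : Fin 4 → ℝ := fun i => if i = j then C * h ^ (a i + 1/6) else C * h ^ (a i) with hb
    have hNb : ∀ i l, ‖(s.piecewise M₀ R) i l‖ ≤ b i := by
      intro i l
      by_cases hi : i ∈ s
      · rw [show s.piecewise M₀ R i = M₀ i from Finset.piecewise_eq_of_mem _ _ _ hi]
        have hij : i ≠ j := fun e => hj (e ▸ hi)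
        rw [hb]; dsimp only; rw [if_neg hij]
        exact hMrow i l
      · rw [show s.piecewise M₀ R i = R i from Finset.piecewise_eq_of_notMem _ _ _ hi, hb]; dsimp only
        split
        · exact hRrow i l
        · exact (hRrow i l).trans (by
            have h2 := Real.rpow_le_rpow_of_exponent_ge hh0 hh1 (by linarith : a i ≤ a i + 1/6)
            nlinarith [Real.rpow_nonneg hh0.le (a i + 1/6)])
    have key : ∀ x0 x1 x2 x3 : ℝ, x0 + x1 + x2 + x3 = -(7:ℝ)/6 →
        (C * h ^ x0) * (C * h ^ x1) * (C * h ^ x2) * (C * h ^ x3)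
          = C ^ 4 * h ^ (-(7:ℝ)/6) := by
      intro x0 x1 x2 x3 hx
      rw [show (C * h ^ x0) * (C * h ^ x1) * (C * h ^ x2) * (C * h ^ x3)
          = C ^ 4 * (h ^ x0 * h ^ x1 * h ^ x2 * h ^ x3) by ring,
        ← Real.rpow_add hh0, ← Real.rpow_add hh0, ← Real.rpow_add hh0, hx]
    have hprod : b 0 * b 1 * b 2 * b 3 = C ^ 4 * h ^ (-(7:ℝ)/6) := by
      have hbi : ∀ i, b i = if i = j then C * h ^ (a i + 1/6) else C * h ^ (a i) :=
        fun i => by rw [hb]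
      rw [hbi 0, hbi 1, hbi 2, hbi 3]
      fin_cases j <;>
        [ rw [if_pos (by decide), if_neg (by decide), if_neg (by decide), if_neg (by decide)];
          rw [if_neg (by decide), if_pos (by decide), if_neg (by decide), if_neg (by decide)];
          rw [if_neg (by decide), if_neg (by decide), if_pos (by decide), if_neg (by decide)];
          rw [if_neg (by decide), if_neg (by decide), if_neg (by decide), if_pos (by decide)] ] <;>
        exact key _ _ _ _ (by norm_num [ha, Matrix.cons_val_two, Matrix.cons_val_three])
    calc ‖Matrix.det (s.piecewise M₀ R)‖ ≤ 24 * (b 0 * b 1 * b 2 * b 3) :=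
          det_abs_bound _ b hNb
      _ = 24 * (C ^ 4 * h ^ (-(7:ℝ)/6)) := by rw [hprod]
  -- put it together
  have hcard : ((Finset.univ : Finset (Finset (Fin 4))).erase Finset.univ).card = 15 := by
    rw [Finset.card_erase_of_mem (Finset.mem_univ _)]
    simp [Finset.card_univ, Fintype.card_finset]
  calc ‖M.det - (u1L * d1R - d1L * u1R) * (u2L * d2R - d2L * u2R)‖
      = ‖∑ s ∈ (Finset.univ : Finset (Finset (Fin 4))).erase Finset.univ,
          Matrix.det (s.piecewise M₀ R)‖ := by rw [hsplit, hdet0]; ring_nf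
    _ ≤ ∑ s ∈ (Finset.univ : Finset (Finset (Fin 4))).erase Finset.univ,
          ‖Matrix.det (s.piecewise M₀ R)‖ := norm_sum_le _ _
    _ ≤ ∑ _s ∈ (Finset.univ : Finset (Finset (Fin 4))).erase Finset.univ,
          (24 * (C ^ 4 * h ^ (-(7:ℝ)/6))) := Finset.sum_le_sum hterm
    _ = 15 * (24 * (C ^ 4 * h ^ (-(7:ℝ)/6))) := by
        rw [Finset.sum_const, hcard, nsmul_eq_mul]; norm_num
    _ = 360 * C ^ 4 * h ^ (-(7:ℝ)/6) := by ring
end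

section
/- For all positive constants c, C₁, M, K, C, D₁ there exist h₀ ∈ (0, 1] and C'' > 0, depending only on these constants, such that the following holds for every 0 < h ≤ h₀. Let J ⊆ ℝ be an interval and 𝒜 : J → ℝ be twice continuously differentiable with c ≤ 𝒜'(E) ≤ C₁ and |𝒜''(E)| ≤ M for all E ∈ J. Let e, E ∈ J satisfy cos(𝒜(e)/h) = 0, |E − e| ≤ K h^{3/2}, and cos²(𝒜(E)/h) = D h + ρ for some D ∈ [0, D₁] and ρ ∈ ℝ with |ρ| ≤ C h^{3/2}. Then | |E − e| − (√D / 𝒜'(e)) h^{3/2} | ≤ C'' h^{7/4}. -/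
open Set

private lemma aux_sin_sub (x : ℝ) (hx : |x| ≤ 1) : |Real.sin x - x| ≤ |x| ^ 3 := by
  rcases lt_trichotomy x 0 with h | h | h
  · have h1 : 0 < -x := by linarith
    have h2 : -x ≤ 1 := by have := (abs_le.mp hx).1; linarith
    have hlt := Real.sin_lt h1
    have hgt := Real.sin_gt_sub_cube h1
    rw [Real.sin_neg] at hlt hgt
    have hax : |x| = -x := abs_of_neg h
    rw [hax, abs_le]
    constructor <;> nlinarith
  · simp [h]
  · have h2 : x ≤ 1 := le_of_abs_le hx
    have hlt := Real.sin_lt h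
    have hgt := Real.sin_gt_sub_cube h
    have hax : |x| = x := abs_of_pos h
    rw [hax, abs_le]
    constructor <;> nlinarith

private lemma aux_sqrt_sub (x y : ℝ) (hx : 0 ≤ x) (hy : 0 ≤ y) :
    |Real.sqrt x - Real.sqrt y| ≤ Real.sqrt |x - y| := by
  wlog h : y ≤ x generalizing x y
  · have := this y x hy hx (le_of_not_ge h)
    rwa [abs_sub_comm, abs_sub_comm x y]
  have hsq : Real.sqrt y ≤ Real.sqrt x := Real.sqrt_le_sqrt h
  have h1 : (Real.sqrt x - Real.sqrt y) ^ 2 ≤ x - y := by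
    have hxy : Real.sqrt x * Real.sqrt y = Real.sqrt (x * y) := (Real.sqrt_mul hx y).symm
    have h2 : y ≤ Real.sqrt (x * y) := by
      have h2' : Real.sqrt (y * y) ≤ Real.sqrt (x * y) :=
        Real.sqrt_le_sqrt (by nlinarith)
      rwa [Real.sqrt_mul_self hy] at h2'
    have sx := Real.sq_sqrt hx
    have sy := Real.sq_sqrt hy
    nlinarith
  have h3 := Real.sqrt_le_sqrt h1
  rw [Real.sqrt_sq (by linarith : (0:ℝ) ≤ Real.sqrt x - Real.sqrt y)] at h3
  rwa [abs_of_nonneg (by linarith : (0:ℝ) ≤ Real.sqrt x - Real.sqrt y),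
    abs_of_nonneg (by linarith : (0:ℝ) ≤ x - y)]

set_option maxHeartbeats 1000000 in
/-- Solving the symmetric quantization condition `cos²(𝒜(E)/h) = Dh + ρ` near a
Bohr–Sommerfeld point `e` (with `cos(𝒜(e)/h) = 0`): any solution `E` with
`|E − e| ≤ Kh^{3/2}` satisfies `|E − e| = (√D/𝒜'(e))h^{3/2} + O(h^{7/4})`. -/
theorem stmt18 (c C₁ M K C D₁ : ℝ) (hc : 0 < c) (hC₁ : 0 < C₁) (hM : 0 < M)
    (hK : 0 < K) (hC : 0 < C) (hD₁ : 0 < D₁) :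
    ∃ h₀ ∈ Ioc (0 : ℝ) 1, ∃ C'' > 0, ∀ h : ℝ, 0 < h → h ≤ h₀ →
      ∀ J : Set ℝ, Convex ℝ J → ∀ A A' A'' : ℝ → ℝ,
      (∀ E ∈ J, HasDerivWithinAt A (A' E) J E) →
      (∀ E ∈ J, HasDerivWithinAt A' (A'' E) J E) →
      ContinuousOn A'' J →
      (∀ E ∈ J, c ≤ A' E ∧ A' E ≤ C₁) →
      (∀ E ∈ J, |A'' E| ≤ M) →
      ∀ e E : ℝ, e ∈ J → E ∈ J →
      Real.cos (A e / h) = 0 →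
      |E - e| ≤ K * h ^ ((3 : ℝ) / 2) →
      ∀ D ρ : ℝ, 0 ≤ D → D ≤ D₁ → |ρ| ≤ C * h ^ ((3 : ℝ) / 2) →
      Real.cos (A E / h) ^ 2 = D * h + ρ →
      |(|E - e|) - Real.sqrt D / A' e * h ^ ((3 : ℝ) / 2)| ≤ C'' * h ^ ((7 : ℝ) / 4) := by
  set L : ℝ := C₁ * K + M * K ^ 2 with hLdef
  have hL0 : 0 < L := by positivity
  refine ⟨min 1 (1 / L ^ 2), ⟨lt_min one_pos (by positivity), min_le_left _ _⟩,
    (Real.sqrt (C + 2 * L ^ 4) + M * K ^ 2) / c, by positivity, ?_⟩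
  intro h hh hh0 J hJ A A' A'' hA hA' _ hA'b hA''b e E he hE hcos hEe D ρ hD hD1 hρ heq
  have hh1 : h ≤ 1 := le_trans hh0 (min_le_left _ _)
  have hhL : h ≤ 1 / L ^ 2 := le_trans hh0 (min_le_right _ _)
  set s : ℝ := Real.sqrt h with hsdef
  have hs0 : 0 < s := Real.sqrt_pos.mpr hh
  have hs2 : s ^ 2 = h := Real.sq_sqrt hh.le
  have hs1 : s ≤ 1 := Real.sqrt_le_one.mpr hh1
  have hhs : h ≤ s := by
    have h1 : s * s ≤ s * 1 := mul_le_mul_of_nonneg_left hs1 hs0.le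
    have h2 : s * s = h := by rw [← hs2]; ring
    linarith only [h1, h2]
  have hLs : L * s ≤ 1 := by
    have hL2 : L ^ 2 * h ≤ 1 := by
      rw [div_eq_mul_inv, one_mul] at hhL
      calc L ^ 2 * h ≤ L ^ 2 * (L^2)⁻¹ :=
            mul_le_mul_of_nonneg_left hhL (by positivity)
        _ = 1 := by field_simp
    have hsq : (L * s) ^ 2 ≤ 1 := by
      calc (L * s) ^ 2 = L ^ 2 * h := by rw [mul_pow, hs2]
        _ ≤ 1 := hL2
    exact le_of_abs_le ((sq_le_one_iff_abs_le_one _).mp hsq)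
  -- rpow facts
  have hhalf : h ^ ((1:ℝ)/2) = s := (Real.sqrt_eq_rpow h).symm
  have hH : h ^ ((3:ℝ)/2) = h * s := by
    rw [show (3:ℝ)/2 = 1 + 1/2 by norm_num, Real.rpow_add hh, Real.rpow_one, hhalf]
  have h3cast : h ^ ((3:ℝ)) = h ^ (3:ℕ) := by
    rw [show ((3:ℝ)) = ((3:ℕ):ℝ) by norm_num, Real.rpow_natCast]
  set P : ℝ := h ^ ((7:ℝ)/4) with hPdef
  have hP0 : 0 < P := Real.rpow_pos_of_pos hh _
  have hP2 : P ^ 2 = h ^ 3 * s := by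
    rw [hPdef, sq, ← Real.rpow_add hh, show (7:ℝ)/4 + 7/4 = 3 + 1/2 by norm_num,
      Real.rpow_add hh, hhalf, h3cast]
  have hh3P : h ^ 3 ≤ P := by
    calc h ^ 3 = h ^ ((3:ℝ)) := h3cast.symm
      _ ≤ h ^ ((7:ℝ)/4) := Real.rpow_le_rpow_of_exponent_ge hh hh1 (by norm_num)
  rw [hH] at hEe hρ ⊢
  -- Taylor estimate
  set d : ℝ := E - e with hddef
  set a : ℝ := A' e with hadef
  have ha : c ≤ a ∧ a ≤ C₁ := hA'b e he
  have ha0 : 0 < a := lt_of_lt_of_le hc ha.1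
  have hA'lip : ∀ x ∈ J, |A' x - a| ≤ M * |x - e| := by
    intro x hx
    have := Convex.norm_image_sub_le_of_norm_hasDerivWithin_le hA'
      (fun y hy => by simpa using hA''b y hy) hJ he hx
    simpa [Real.norm_eq_abs] using this
  set S : Set ℝ := segment ℝ e E with hSdef
  have hSJ : S ⊆ J := hJ.segment_subset he hE
  have hseg : ∀ x ∈ S, |x - e| ≤ |d| := by
    intro x hx
    rw [hSdef, segment_eq_uIcc] at hx
    rcases le_total e E with hle | hle
    · rw [uIcc_of_le hle] at hx
      rw [abs_of_nonneg (by linarith [hx.1]), hddef, abs_of_nonneg (by linarith)]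
      linarith [hx.2]
    · rw [uIcc_of_ge hle] at hx
      rw [abs_of_nonpos (by linarith [hx.2]), hddef, abs_of_nonpos (by linarith)]
      linarith [hx.1]
  set rr : ℝ := A E - A e - a * d with hrrdef
  have hr : |rr| ≤ M * d ^ 2 := by
    have hg : ∀ x ∈ S, HasDerivWithinAt (fun y => A y - a * y) (A' x - a) S x := by
      intro x hx
      have h1 := (hA x (hSJ hx)).mono hSJ
      have h2 : HasDerivWithinAt (fun y => a * y) a S x := by
        simpa using (hasDerivWithinAt_id x S).const_mul a
      exact h1.sub h2
    have hbound : ∀ x ∈ S, ‖A' x - a‖ ≤ M * |d| := by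
      intro x hx
      rw [Real.norm_eq_abs]
      calc |A' x - a| ≤ M * |x - e| := hA'lip x (hSJ hx)
        _ ≤ M * |d| := mul_le_mul_of_nonneg_left (hseg x hx) hM.le
    have hmv := Convex.norm_image_sub_le_of_norm_hasDerivWithin_le hg hbound
      (convex_segment e E) (left_mem_segment ℝ e E) (right_mem_segment ℝ e E)
    have heq2 : A E - a * E - (A e - a * e) = rr := by rw [hrrdef, hddef]; ring
    rw [Real.norm_eq_abs, Real.norm_eq_abs, heq2] at hmv
    calc |rr| ≤ M * |d| * |E - e| := hmv
      _ = M * d ^ 2 := by rw [← hddef, ← sq_abs]; ring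
  -- reduction to sin
  set θ : ℝ := (A E - A e) / h with hθdef
  have hsinθ : Real.sin θ ^ 2 = D * h + ρ := by
    have hAE : A E / h = A e / h + θ := by rw [hθdef]; field_simp; ring
    have hsin1 : Real.sin (A e / h) ^ 2 = 1 := by
      have := Real.sin_sq_add_cos_sq (A e / h)
      rw [hcos] at this; linarith only [this]
    rw [hAE, Real.cos_add, hcos] at heq
    have hsq : (0 * Real.cos θ - Real.sin (A e / h) * Real.sin θ) ^ 2
        = Real.sin (A e / h) ^ 2 * Real.sin θ ^ 2 := by ring
    rw [hsq, hsin1, one_mul] at heq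
    exact heq
  -- bound on θ
  have hd : |d| ≤ K * (h * s) := hEe
  have hrb : |rr| ≤ M * K ^ 2 * h ^ 2 * h := by
    calc |rr| ≤ M * d ^ 2 := hr
      _ ≤ M * (K * (h * s)) ^ 2 := by
          have hd2 : d ^ 2 ≤ (K * (h * s)) ^ 2 := by
            rw [← sq_abs]
            exact pow_le_pow_left₀ (abs_nonneg d) hd 2
          exact mul_le_mul_of_nonneg_left hd2 hM.le
      _ = M * K ^ 2 * h ^ 2 * h := by rw [mul_pow, mul_pow, hs2]; ring
  have hh2s : h ^ 2 * h ≤ s * h := by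
    have h1 : h * h ≤ 1 * h := mul_le_mul_of_nonneg_right hh1 hh.le
    have h2 : h ^ 2 ≤ s := by nlinarith only [h1, hhs]
    exact mul_le_mul_of_nonneg_right h2 hh.le
  have hθb : |θ| ≤ L * s := by
    have had : |a * d| ≤ C₁ * K * (h * s) := by
      rw [abs_mul, abs_of_pos ha0]
      calc a * |d| ≤ C₁ * |d| := mul_le_mul_of_nonneg_right ha.2 (abs_nonneg d)
        _ ≤ C₁ * (K * (h * s)) := mul_le_mul_of_nonneg_left hd hC₁.le
        _ = C₁ * K * (h * s) := by ring
    have h1 : |A E - A e| ≤ C₁ * K * (h * s) + M * K ^ 2 * h ^ 2 * h := by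
      calc |A E - A e| = |a * d + rr| := by rw [hrrdef]; ring_nf
        _ ≤ |a * d| + |rr| := abs_add_le _ _
        _ ≤ _ := add_le_add had hrb
    rw [hθdef, abs_div, abs_of_pos hh, div_le_iff₀ hh]
    calc |A E - A e| ≤ C₁ * K * (h * s) + M * K ^ 2 * h ^ 2 * h := h1
      _ ≤ L * s * h := by
          rw [hLdef]
          linarith only [mul_le_mul_of_nonneg_left hh2s
            (by positivity : (0:ℝ) ≤ M * K ^ 2)]
  have hθ1 : |θ| ≤ 1 := le_trans hθb hLs
  -- θ² = Dh + σ
  have hsin2 : |Real.sin θ ^ 2 - θ ^ 2| ≤ 2 * L ^ 4 * h ^ 2 := by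
    have h1 := aux_sin_sub θ hθ1
    have h2 : |Real.sin θ + θ| ≤ 2 * |θ| := by
      calc |Real.sin θ + θ| ≤ |Real.sin θ| + |θ| := abs_add_le _ _
        _ ≤ 2 * |θ| := by linarith only [Real.abs_sin_le_abs (x := θ), abs_nonneg θ]
    have h4 : |θ| ^ 4 ≤ (L * s) ^ 4 := pow_le_pow_left₀ (abs_nonneg θ) hθb 4
    calc |Real.sin θ ^ 2 - θ ^ 2| = |Real.sin θ - θ| * |Real.sin θ + θ| := by
          rw [← abs_mul]; ring_nf
      _ ≤ |θ| ^ 3 * (2 * |θ|) :=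
          mul_le_mul h1 h2 (abs_nonneg _) (by positivity)
      _ = 2 * |θ| ^ 4 := by ring
      _ ≤ 2 * (L * s) ^ 4 := by linarith only [h4]
      _ = 2 * L ^ 4 * h ^ 2 := by
          rw [mul_pow, show s ^ 4 = h ^ 2 by rw [← hs2]; ring]; ring
  set σ : ℝ := ρ + (θ ^ 2 - Real.sin θ ^ 2) with hσdef
  have hθ2 : θ ^ 2 = D * h + σ := by rw [hσdef]; linear_combination hsinθ
  have hσb : |σ| ≤ (C + 2 * L ^ 4) * (h * s) := by
    have hh2hs : h ^ 2 ≤ h * s := by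
      have h1 : h * h ≤ h * s := mul_le_mul_of_nonneg_left hhs hh.le
      nlinarith only [h1]
    calc |σ| ≤ |ρ| + |θ ^ 2 - Real.sin θ ^ 2| := abs_add_le _ _
      _ ≤ C * (h * s) + 2 * L ^ 4 * h ^ 2 := by
          rw [abs_sub_comm]; exact add_le_add hρ hsin2
      _ ≤ (C + 2 * L ^ 4) * (h * s) := by
          linarith only [mul_le_mul_of_nonneg_left hh2hs
            (by positivity : (0:ℝ) ≤ 2 * L ^ 4)]
  -- sqrt step
  have hDσ : 0 ≤ D * h + σ := hθ2 ▸ sq_nonneg θ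
  have hsqrtstep : |(|θ|) - Real.sqrt D * s| ≤ Real.sqrt (C + 2 * L ^ 4) * Real.sqrt (h * s) := by
    have h1 : |θ| = Real.sqrt (D * h + σ) := by
      rw [← hθ2, Real.sqrt_sq_eq_abs]
    have h2 : Real.sqrt (D * h) = Real.sqrt D * s := by
      rw [Real.sqrt_mul hD, hsdef]
    have h3 := aux_sqrt_sub (D * h + σ) (D * h) hDσ (by positivity)
    rw [h2, show D * h + σ - D * h = σ by ring] at h3
    calc |(|θ|) - Real.sqrt D * s| ≤ Real.sqrt |σ| := by rw [h1]; exact h3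
      _ ≤ Real.sqrt ((C + 2 * L ^ 4) * (h * s)) := Real.sqrt_le_sqrt hσb
      _ = Real.sqrt (C + 2 * L ^ 4) * Real.sqrt (h * s) :=
          Real.sqrt_mul (by positivity) _
  -- multiply by h
  have hsP : Real.sqrt (h * s) * h = P := by
    have h1 : (Real.sqrt (h * s) * h) ^ 2 = h ^ 3 * s := by
      rw [mul_pow, Real.sq_sqrt (by positivity : (0:ℝ) ≤ h * s)]; ring
    have h4 : (Real.sqrt (h * s) * h - P) * (Real.sqrt (h * s) * h + P) = 0 := by
      linear_combination h1 - hP2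
    have h5 : 0 < Real.sqrt (h * s) * h + P := by positivity
    rcases mul_eq_zero.mp h4 with h6 | h6
    · linarith only [h6]
    · linarith only [h5, h6]
  have hθh : |θ| * h = |a * d + rr| := by
    rw [hθdef, abs_div, abs_of_pos hh, div_mul_cancel₀ _ hh.ne']
    congr 1
    rw [hrrdef]; ring
  have hstep2 : |(|θ|) * h - Real.sqrt D * s * h| ≤ Real.sqrt (C + 2 * L ^ 4) * P := by
    calc |(|θ|) * h - Real.sqrt D * s * h|
        = |(|θ|) - Real.sqrt D * s| * h := by
          rw [show (|θ|) * h - Real.sqrt D * s * h = ((|θ|) - Real.sqrt D * s) * h by ring,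
            abs_mul, abs_of_pos hh]
      _ ≤ (Real.sqrt (C + 2 * L ^ 4) * Real.sqrt (h * s)) * h :=
          mul_le_mul_of_nonneg_right hsqrtstep hh.le
      _ = Real.sqrt (C + 2 * L ^ 4) * P := by rw [← hsP]; ring
  -- remove r
  have hadw : |a * |d| - Real.sqrt D * s * h|
      ≤ (Real.sqrt (C + 2 * L ^ 4) + M * K ^ 2) * P := by
    have h1 : a * |d| = |a * d| := by rw [abs_mul, abs_of_pos ha0]
    have h2 : |(|a * d|) - abs (a * d + rr)| ≤ |rr| := by
      have h2' := abs_abs_sub_abs_le_abs_sub (a * d) (a * d + rr)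
      rwa [show a * d - (a * d + rr) = -rr by ring, abs_neg] at h2'
    have h3 : |rr| ≤ M * K ^ 2 * P := by
      calc |rr| ≤ M * K ^ 2 * h ^ 2 * h := hrb
        _ = M * K ^ 2 * h ^ 3 := by ring
        _ ≤ M * K ^ 2 * P := mul_le_mul_of_nonneg_left hh3P (by positivity)
    have h4 : |abs (a * d + rr) - Real.sqrt D * s * h|
        ≤ Real.sqrt (C + 2 * L ^ 4) * P := by
      rw [← hθh]; exact hstep2
    calc |a * |d| - Real.sqrt D * s * h|
        = |(|a * d|) - Real.sqrt D * s * h| := by rw [h1]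
      _ ≤ |(|a * d|) - abs (a * d + rr)| + |abs (a * d + rr) - Real.sqrt D * s * h| :=
          abs_sub_le _ _ _
      _ ≤ M * K ^ 2 * P + Real.sqrt (C + 2 * L ^ 4) * P := add_le_add (h2.trans h3) h4
      _ = (Real.sqrt (C + 2 * L ^ 4) + M * K ^ 2) * P := by ring
  -- divide by a
  have hfinal : c * |(|d|) - Real.sqrt D / a * (h * s)|
      ≤ (Real.sqrt (C + 2 * L ^ 4) + M * K ^ 2) * P := by
    calc c * |(|d|) - Real.sqrt D / a * (h * s)|
        ≤ a * |(|d|) - Real.sqrt D / a * (h * s)| :=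
          mul_le_mul_of_nonneg_right ha.1 (abs_nonneg _)
      _ = |a * ((|d|) - Real.sqrt D / a * (h * s))| := by
          rw [abs_mul, abs_of_pos ha0]
      _ = |a * |d| - Real.sqrt D * s * h| := by
          rw [show a * ((|d|) - Real.sqrt D / a * (h * s)) = a * |d| - Real.sqrt D * s * h by
            field_simp]
      _ ≤ (Real.sqrt (C + 2 * L ^ 4) + M * K ^ 2) * P := hadw
  have h9 : (Real.sqrt (C + 2 * L ^ 4) + M * K ^ 2) / c * P
      = (Real.sqrt (C + 2 * L ^ 4) + M * K ^ 2) * P / c := by ring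
  rw [h9, le_div_iff₀ hc]
  linarith only [hfinal]
end
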